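/- arXiv:2507.02323 — 4 statements merged into one kernel-verified Lean document; each statement's English description precedes it below -/
import Mathlib

section
/- For each α ∈ (0,1), the function h_α(f) = f·(−log f)^α is concave on (0,1]. -/
open Real Set

private lemma fde_hd1 {α x : ℝ} (hx0 : 0 < x) (hx1 : x < 1) :
    HasDerivAt (fun f : ℝ => f * (-Real.log f) ^ α)
      ((-Real.log x) ^ α - α * (-Real.log x) ^ (α - 1)) x := by
  have hlog : 0 < -Real.log x := by
    have := Real.log_neg hx0 hx1; linarith
  have hL : HasDerivAt (fun f : ℝ => -Real.log f) (-x⁻¹) x :=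
    (Real.hasDerivAt_log hx0.ne').neg
  have hP : HasDerivAt (fun f : ℝ => (-Real.log f) ^ α)
      (α * (-Real.log x) ^ (α - 1) * -x⁻¹) x :=
    by have := (Real.hasDerivAt_rpow_const (x := -Real.log x) (p := α) (Or.inl hlog.ne')).comp x hL; exact this
  have h : HasDerivAt (fun f : ℝ => f * (-Real.log f) ^ α)
      (1 * (-Real.log x) ^ α + x * (α * (-Real.log x) ^ (α - 1) * -x⁻¹)) x :=
    (hasDerivAt_id x).mul hP
  convert h using 1
  field_simp
  ring

private lemma fde_hd2 {α x : ℝ} (hx0 : 0 < x) (hx1 : x < 1) :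
    HasDerivAt (fun f : ℝ => (-Real.log f) ^ α - α * (-Real.log f) ^ (α - 1))
      (α * (-Real.log x) ^ (α - 1) * -x⁻¹
        - α * ((α - 1) * (-Real.log x) ^ (α - 1 - 1) * -x⁻¹)) x := by
  have hlog : 0 < -Real.log x := by
    have := Real.log_neg hx0 hx1; linarith
  have hL : HasDerivAt (fun f : ℝ => -Real.log f) (-x⁻¹) x :=
    (Real.hasDerivAt_log hx0.ne').neg
  have hP : HasDerivAt (fun f : ℝ => (-Real.log f) ^ α)
      (α * (-Real.log x) ^ (α - 1) * -x⁻¹) x :=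
    by have := (Real.hasDerivAt_rpow_const (x := -Real.log x) (p := α) (Or.inl hlog.ne')).comp x hL; exact this
  have hQ : HasDerivAt (fun f : ℝ => (-Real.log f) ^ (α - 1))
      ((α - 1) * (-Real.log x) ^ (α - 1 - 1) * -x⁻¹) x :=
    by have := (Real.hasDerivAt_rpow_const (x := -Real.log x) (p := α - 1) (Or.inl hlog.ne')).comp x hL; exact this
  exact hP.sub (hQ.const_mul α)

theorem fde_entropy_function_concave (α : ℝ) (hα : α ∈ Set.Ioo (0:ℝ) 1) :
    ConcaveOn ℝ (Set.Ioc (0:ℝ) 1) (fun f : ℝ => f * (-Real.log f) ^ α) := by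
  obtain ⟨hα0, hα1⟩ := hα
  apply (strictConcaveOn_of_deriv2_neg (convex_Ioc 0 1) ?_ ?_).concaveOn
  · -- continuity on Ioc
    apply ContinuousOn.mul continuousOn_id
    apply ContinuousOn.rpow_const
    · exact (Real.continuousOn_log.mono (fun y hy => ne_of_gt hy.1)).neg
    · intro y _; exact Or.inr hα0.le
  · intro x hx
    rw [interior_Ioc] at hx
    obtain ⟨hx0, hx1⟩ := hx
    have hlog : 0 < -Real.log x := by
      have := Real.log_neg hx0 hx1; linarith
    -- derivative equals formula on a neighborhood
    have hev : deriv (fun f : ℝ => f * (-Real.log f) ^ α)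
        =ᶠ[nhds x] fun f : ℝ => (-Real.log f) ^ α - α * (-Real.log f) ^ (α - 1) := by
      filter_upwards [Ioo_mem_nhds hx0 hx1] with y hy
      exact (fde_hd1 hy.1 hy.2).deriv
    have h2 : deriv^[2] (fun f : ℝ => f * (-Real.log f) ^ α) x
        = α * (-Real.log x) ^ (α - 1) * -x⁻¹
          - α * ((α - 1) * (-Real.log x) ^ (α - 1 - 1) * -x⁻¹) := by
      simp only [Function.iterate_succ, Function.iterate_zero, Function.comp_apply, id]
      rw [hev.deriv_eq]
      exact (fde_hd2 hx0 hx1).deriv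
    rw [h2]
    have h1 : (-Real.log x) ^ (α - 1) = (-Real.log x) ^ (α - 1 - 1) * (-Real.log x) := by
      rw [← Real.rpow_add_one hlog.ne' (α - 1 - 1)]
      ring_nf
    rw [h1]
    have hp : 0 < (-Real.log x) ^ (α - 1 - 1) := Real.rpow_pos_of_pos hlog _
    have hxinv : 0 < x⁻¹ := inv_pos.mpr hx0
    nlinarith [mul_pos (mul_pos hα0 hp) hxinv, mul_pos hlog (mul_pos (mul_pos hα0 hp) hxinv)]
end

section
/- For the exponential distribution with rate λ ∈ (0,1], the fractional differential entropy equals (1/λ)·Γ(1+α, log(1/λ)), where Γ(s,x) is the upper incomplete gamma function. -/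
open MeasureTheory

/-- Upper incomplete gamma function Γ(s, x) = ∫_x^∞ e^{−t} t^{s−1} dt. -/
noncomputable def upperIncGamma (s x : ℝ) : ℝ :=
  ∫ t in Set.Ioi x, Real.exp (-t) * t ^ (s - 1)

lemma shift_Ioi (f : ℝ → ℝ) (a c : ℝ) :
    ∫ x in Set.Ioi a, f (x + c) = ∫ x in Set.Ioi (a + c), f x := by
  have h := (measurePreserving_add_right (volume : Measure ℝ) c).setIntegral_preimage_emb
    (MeasurableEquiv.addRight c).measurableEmbedding f (Set.Ioi (a + c))
  have hpre : (fun x : ℝ => x + c) ⁻¹' Set.Ioi (a + c) = Set.Ioi a := by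
    ext x; simp
  simpa [hpre] using h

theorem fde_exponential (α : ℝ) (hα : α ∈ Set.Ioc (0:ℝ) 1) (lam : ℝ)
    (hlam : lam ∈ Set.Ioc (0:ℝ) 1) :
    ∫ x in Set.Ioi (0:ℝ),
        (lam * Real.exp (-lam * x)) * (-Real.log (lam * Real.exp (-lam * x))) ^ α
      = lam⁻¹ * upperIncGamma (1 + α) (-Real.log lam) := by
  obtain ⟨hl0, hl1⟩ := hlam
  set c : ℝ := -Real.log lam with hc
  have hstep : ∀ x : ℝ,
      (lam * Real.exp (-lam * x)) * (-Real.log (lam * Real.exp (-lam * x))) ^ α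
        = (fun y => Real.exp (-(y + c)) * (y + c) ^ α) (lam * x) := by
    intro x
    have h1 : lam * Real.exp (-lam * x) = Real.exp (-(lam * x + c)) := by
      rw [hc, neg_add, neg_neg, Real.exp_add, Real.exp_log hl0, neg_mul]
      ring
    rw [h1, Real.log_exp, neg_neg]
  calc ∫ x in Set.Ioi (0:ℝ),
        (lam * Real.exp (-lam * x)) * (-Real.log (lam * Real.exp (-lam * x))) ^ α
      = ∫ x in Set.Ioi (0:ℝ), (fun y => Real.exp (-(y + c)) * (y + c) ^ α) (lam * x) := by
        simp only [hstep]
    _ = lam⁻¹ • ∫ y in Set.Ioi (lam * 0), Real.exp (-(y + c)) * (y + c) ^ α := by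
        simpa using MeasureTheory.integral_comp_mul_left_Ioi
          (fun y => Real.exp (-(y + c)) * (y + c) ^ α) 0 hl0
    _ = lam⁻¹ * ∫ t in Set.Ioi (0 + c), Real.exp (-t) * t ^ α := by
        rw [mul_zero, smul_eq_mul, shift_Ioi (fun t => Real.exp (-t) * t ^ α) 0 c]
    _ = lam⁻¹ * upperIncGamma (1 + α) c := by
        rw [zero_add, upperIncGamma]
        congr 1
        apply setIntegral_congr_fun measurableSet_Ioi
        intro t _
        norm_num
end

section
/- If X has bounded support [0,b] and density f with 0 < f ≤ 1, then H^α(f) ≤ b^{1−α}·(H_S(f))^α for 0 < α ≤ 1. -/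
open MeasureTheory

theorem fde_le_scaled_shannon_rpow (α : ℝ) (hα : α ∈ Set.Ioc (0:ℝ) 1)
    (b : ℝ) (hb : 0 < b)
    (f : ℝ → ℝ) (hf : ∀ x ∈ Set.Icc (0:ℝ) b, 0 < f x ∧ f x ≤ 1)
    (hdens : ∫ x in Set.Icc (0:ℝ) b, f x = 1)
    (hint1 : IntegrableOn (fun x => f x * (-Real.log (f x)) ^ α) (Set.Icc 0 b))
    (hint2 : IntegrableOn (fun x => f x * (-Real.log (f x))) (Set.Icc 0 b)) :
    ∫ x in Set.Icc (0:ℝ) b, f x * (-Real.log (f x)) ^ α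
      ≤ b ^ (1 - α) * (∫ x in Set.Icc (0:ℝ) b, f x * (-Real.log (f x))) ^ α := by
  obtain ⟨hα0, hα1⟩ := hα
  set s : Set ℝ := Set.Icc (0:ℝ) b with hs
  set ν : Measure ℝ := volume.restrict s with hν
  -- f is integrable on s
  have hfint : IntegrableOn f s := by
    by_contra h
    rw [integral_undef h] at hdens
    norm_num at hdens
  have hfae : ∀ᵐ x ∂ν, x ∈ s := ae_restrict_mem measurableSet_Icc
  have hfpos : ∀ᵐ x ∂ν, 0 ≤ f x := hfae.mono fun x hx => (hf x hx).1.le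
  have hglog : ∀ᵐ x ∂ν, 0 ≤ -Real.log (f x) := hfae.mono fun x hx => by
    have := Real.log_nonpos (hf x hx).1.le (hf x hx).2
    linarith
  have hfm : AEMeasurable f ν := hfint.aemeasurable
  have hfnn : AEMeasurable (fun x => (f x).toNNReal) ν := hfm.real_toNNReal
  set μ : Measure ℝ := ν.withDensity (fun x => ((f x).toNNReal : ENNReal)) with hμ
  have hprob : IsProbabilityMeasure μ := by
    constructor
    rw [hμ, withDensity_apply _ MeasurableSet.univ, Measure.restrict_univ]
    have : ∫⁻ x, ((f x).toNNReal : ENNReal) ∂ν = ENNReal.ofReal (∫ x, f x ∂ν) := by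
      have hco : (fun x => ((f x).toNNReal : ENNReal)) = fun x => ENNReal.ofReal (f x) := rfl
      rw [hco, ← ofReal_integral_eq_lintegral_ofReal hfint hfpos]
    rw [this, hdens]
    simp
  -- transfer integrals
  have key : ∀ g : ℝ → ℝ, ∫ x, g x ∂μ = ∫ x, f x * g x ∂ν := by
    intro g
    rw [hμ, integral_withDensity_eq_integral_smul₀ hfnn]
    refine integral_congr_ae (hfpos.mono fun x hx => ?_)
    simp [NNReal.smul_def, Real.coe_toNNReal _ hx]
  -- transfer integrability
  have keyInt : ∀ g : ℝ → ℝ, Integrable (fun x => f x * g x) ν → Integrable g μ := by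
    intro g hg
    rw [hμ, integrable_withDensity_iff_integrable_smul₀ hfnn]
    refine hg.congr (hfpos.mono fun x hx => ?_)
    simp [NNReal.smul_def, Real.coe_toNNReal _ hx]
  have hi1 : Integrable (fun x => (-Real.log (f x)) ^ α) μ := keyInt _ hint1
  have hi2 : Integrable (fun x => -Real.log (f x)) μ := keyInt _ hint2
  have hac : μ ≪ ν := withDensity_absolutelyContinuous ν _
  have hμae : ∀ᵐ x ∂μ, (fun x => -Real.log (f x)) x ∈ Set.Ici (0:ℝ) :=
    (hglog.filter_mono hac.ae_le)
  -- Jensen's inequality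
  have jensen :
      (∫ x, (-Real.log (f x)) ^ α ∂μ) ≤ (∫ x, -Real.log (f x) ∂μ) ^ α := by
    have := (Real.concaveOn_rpow hα0.le hα1).le_map_integral
      (Real.continuous_rpow_const hα0.le).continuousOn isClosed_Ici hμae hi2 hi1
    exact this
  rw [key, key] at jensen
  -- b ≥ 1
  have hb1 : (1:ℝ) ≤ b := by
    have h1 : ∫ x, f x ∂ν ≤ ∫ x, (1:ℝ) ∂ν := by
      refine integral_mono_ae hfint (integrable_const 1) ?_
      exact hfae.mono fun x hx => (hf x hx).2
    rw [hdens] at h1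
    rwa [integral_const, smul_eq_mul, mul_one, hν, Measure.real, Measure.restrict_apply_univ, hs,
      Real.volume_Icc, sub_zero, ENNReal.toReal_ofReal hb.le] at h1
  have hpow1 : (1:ℝ) ≤ b ^ (1 - α) := Real.one_le_rpow hb1 (by linarith)
  have hrhs : 0 ≤ (∫ x, f x * (-Real.log (f x)) ∂ν) ^ α := by
    refine Real.rpow_nonneg (integral_nonneg_of_ae ?_) _
    filter_upwards [hfpos, hglog] with x h1 h2
    exact mul_nonneg h1 h2
  calc ∫ x in s, f x * (-Real.log (f x)) ^ α
      ≤ (∫ x in s, f x * (-Real.log (f x))) ^ α := jensen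
    _ = 1 * (∫ x in s, f x * (-Real.log (f x))) ^ α := (one_mul _).symm
    _ ≤ b ^ (1 - α) * (∫ x in s, f x * (-Real.log (f x))) ^ α :=
        mul_le_mul_of_nonneg_right hpow1 hrhs
end

section
/- For independent nonnegative absolutely continuous random variables X, Y with joint density f(x,y) = f_X(x)f_Y(y) satisfying 0 < f_X, f_Y ≤ 1, the joint fractional differential entropy is subadditive: H^α(f_{X,Y}) ≤ H^α(f_X) + H^α(f_Y) for 0 < α ≤ 1, with equality iff α = 1. -/
open MeasureTheory

lemma real_rpow_add_le {u v α : ℝ} (hu : 0 ≤ u) (hv : 0 ≤ v) (h0 : 0 ≤ α) (h1 : α ≤ 1) :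
    (u + v) ^ α ≤ u ^ α + v ^ α := by
  have h := NNReal.rpow_add_le_add_rpow (⟨u, hu⟩ : NNReal) ⟨v, hv⟩ h0 h1
  have h2 := NNReal.coe_le_coe.mpr h
  exact h2

lemma real_rpow_add_lt {u v α : ℝ} (hu : 0 < u) (hv : 0 < v) (h0 : 0 < α) (h1 : α < 1) :
    (u + v) ^ α < u ^ α + v ^ α := by
  have hs : 0 < u + v := by linarith
  have hku : u / (u + v) < (u / (u + v)) ^ α := by
    calc u / (u + v) = (u / (u + v)) ^ (1:ℝ) := (Real.rpow_one _).symm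
    _ < (u / (u + v)) ^ α :=
      Real.rpow_lt_rpow_of_exponent_gt (div_pos hu hs) ((div_lt_one hs).mpr (by linarith)) h1
  have hkv : v / (u + v) < (v / (u + v)) ^ α := by
    calc v / (u + v) = (v / (u + v)) ^ (1:ℝ) := (Real.rpow_one _).symm
    _ < (v / (u + v)) ^ α :=
      Real.rpow_lt_rpow_of_exponent_gt (div_pos hv hs) ((div_lt_one hs).mpr (by linarith)) h1
  have hone : (1:ℝ) < (u / (u + v)) ^ α + (v / (u + v)) ^ α := by
    have : u / (u + v) + v / (u + v) = 1 := by field_simp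
    linarith
  have hsα : (0:ℝ) < (u + v) ^ α := Real.rpow_pos_of_pos hs α
  calc (u + v) ^ α = (u + v) ^ α * 1 := (mul_one _).symm
  _ < (u + v) ^ α * ((u / (u + v)) ^ α + (v / (u + v)) ^ α) :=
      mul_lt_mul_of_pos_left hone hsα
  _ = u ^ α + v ^ α := by
      rw [Real.div_rpow hu.le hs.le, Real.div_rpow hv.le hs.le]
      field_simp

theorem fde_subadditive_independent (α : ℝ) (hα : α ∈ Set.Ioc (0:ℝ) 1)
    (fX fY : ℝ → ℝ)
    (hfX : ∀ x ∈ Set.Ici (0:ℝ), 0 < fX x ∧ fX x ≤ 1)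
    (hfY : ∀ y ∈ Set.Ici (0:ℝ), 0 < fY y ∧ fY y ≤ 1)
    (hdX : ∫ x in Set.Ici (0:ℝ), fX x = 1)
    (hdY : ∫ y in Set.Ici (0:ℝ), fY y = 1)
    (hiX : IntegrableOn (fun x => fX x * (-Real.log (fX x)) ^ α) (Set.Ici 0))
    (hiY : IntegrableOn (fun y => fY y * (-Real.log (fY y)) ^ α) (Set.Ici 0))
    (hiXY : IntegrableOn
      (fun p : ℝ × ℝ => fX p.1 * fY p.2 * (-Real.log (fX p.1 * fY p.2)) ^ α)
      (Set.Ici 0 ×ˢ Set.Ici 0)) :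
    (∫ p in (Set.Ici (0:ℝ) ×ˢ Set.Ici (0:ℝ)),
        fX p.1 * fY p.2 * (-Real.log (fX p.1 * fY p.2)) ^ α)
      ≤ (∫ x in Set.Ici (0:ℝ), fX x * (-Real.log (fX x)) ^ α)
        + (∫ y in Set.Ici (0:ℝ), fY y * (-Real.log (fY y)) ^ α) ∧
    ((∫ p in (Set.Ici (0:ℝ) ×ˢ Set.Ici (0:ℝ)),
        fX p.1 * fY p.2 * (-Real.log (fX p.1 * fY p.2)) ^ α)
      = (∫ x in Set.Ici (0:ℝ), fX x * (-Real.log (fX x)) ^ α)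
        + (∫ y in Set.Ici (0:ℝ), fY y * (-Real.log (fY y)) ^ α) ↔ α = 1) := by
  obtain ⟨hα0, hα1⟩ := hα
  set μ : Measure ℝ := volume.restrict (Set.Ici (0:ℝ)) with hμdef
  set s : Set (ℝ × ℝ) := Set.Ici (0:ℝ) ×ˢ Set.Ici (0:ℝ) with hsdef
  have hs : MeasurableSet s := measurableSet_Ici.prod measurableSet_Ici
  have hrw : (volume : Measure (ℝ × ℝ)).restrict s = μ.prod μ := by
    rw [hμdef, Measure.prod_restrict, ← Measure.volume_eq_prod]
  -- integrability of fX, fY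
  have hIfX : Integrable fX μ := by
    by_contra h
    rw [MeasureTheory.integral_undef h] at hdX
    exact one_ne_zero hdX.symm
  have hIfY : Integrable fY μ := by
    by_contra h
    rw [MeasureTheory.integral_undef h] at hdY
    exact one_ne_zero hdY.symm
  -- the sum-form function and its integrability
  set R : ℝ × ℝ → ℝ := fun p =>
    (fX p.1 * (-Real.log (fX p.1)) ^ α) * fY p.2
      + fX p.1 * (fY p.2 * (-Real.log (fY p.2)) ^ α) with hRdef
  have hIR : IntegrableOn R s := by
    rw [IntegrableOn, hrw]
    exact (hiX.mul_prod hIfY).add (hIfX.mul_prod hiY)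
  -- splitting the integral of R
  have hsplit : (∫ p in s, R p)
      = (∫ x in Set.Ici (0:ℝ), fX x * (-Real.log (fX x)) ^ α)
        + (∫ y in Set.Ici (0:ℝ), fY y * (-Real.log (fY y)) ^ α) := by
    have h1 : (∫ p in s, R p) = ∫ p, R p ∂(μ.prod μ) := by
      rw [← hrw]
    rw [h1, hRdef]
    rw [integral_add (hiX.mul_prod hIfY) (hIfX.mul_prod hiY)]
    rw [integral_prod_mul (fun x => fX x * (-Real.log (fX x)) ^ α) fY]
    rw [integral_prod_mul fX (fun y => fY y * (-Real.log (fY y)) ^ α)]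
    rw [hdX, hdY, mul_one, one_mul]
  -- pointwise facts on s
  have hpt : ∀ p ∈ s, 0 ≤ -Real.log (fX p.1) ∧ 0 ≤ -Real.log (fY p.2) ∧
      -Real.log (fX p.1 * fY p.2) = -Real.log (fX p.1) + -Real.log (fY p.2) := by
    rintro ⟨x, y⟩ ⟨hx, hy⟩
    obtain ⟨hx0, hx1⟩ := hfX x hx
    obtain ⟨hy0, hy1⟩ := hfY y hy
    refine ⟨by simpa using Real.log_nonpos hx0.le hx1,
      by simpa using Real.log_nonpos hy0.le hy1, ?_⟩
    rw [Real.log_mul hx0.ne' hy0.ne']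
    ring
  -- forward inequality
  have hle : (∫ p in s, fX p.1 * fY p.2 * (-Real.log (fX p.1 * fY p.2)) ^ α)
      ≤ ∫ p in s, R p := by
    refine setIntegral_mono_on hiXY hIR hs ?_
    rintro ⟨x, y⟩ hp
    obtain ⟨hu, hv, hlog⟩ := hpt _ hp
    obtain ⟨hx0, _⟩ := hfX x hp.1
    obtain ⟨hy0, _⟩ := hfY y hp.2
    have hmul : 0 ≤ fX x * fY y := by positivity
    calc fX x * fY y * (-Real.log (fX x * fY y)) ^ α
        = fX x * fY y * (-Real.log (fX x) + -Real.log (fY y)) ^ α := by rw [hlog]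
      _ ≤ fX x * fY y * ((-Real.log (fX x)) ^ α + (-Real.log (fY y)) ^ α) :=
          mul_le_mul_of_nonneg_left (real_rpow_add_le hu hv hα0.le hα1) hmul
      _ = R (x, y) := by rw [hRdef]; ring
  refine ⟨hsplit ▸ hle, ?_, ?_⟩
  · -- equality → α = 1
    intro heq
    by_contra hne
    have hαlt : α < 1 := lt_of_le_of_ne hα1 hne
    -- difference function is nonneg a.e., integrable, integral zero
    set g : ℝ × ℝ → ℝ := fun p =>
      R p - fX p.1 * fY p.2 * (-Real.log (fX p.1 * fY p.2)) ^ α with hgdef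
    have hIg : Integrable g ((volume : Measure (ℝ × ℝ)).restrict s) := hIR.sub hiXY
    have hg0 : 0 ≤ᵐ[(volume : Measure (ℝ × ℝ)).restrict s] g := by
      rw [Filter.EventuallyLE, ae_restrict_iff' hs]
      refine Filter.Eventually.of_forall ?_
      rintro ⟨x, y⟩ hp
      obtain ⟨hu, hv, hlog⟩ := hpt _ hp
      obtain ⟨hx0, _⟩ := hfX x hp.1
      obtain ⟨hy0, _⟩ := hfY y hp.2
      have hmul : 0 ≤ fX x * fY y := by positivity
      have := mul_le_mul_of_nonneg_left (real_rpow_add_le hu hv hα0.le hα1) hmul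
      simp only [hgdef, hRdef, Pi.zero_apply]
      rw [hlog]
      nlinarith [this]
    have hgint : (∫ p in s, g p) = 0 := by
      rw [hgdef]
      rw [integral_sub hIR hiXY]
      rw [hsplit, heq]
      ring
    have hgz : g =ᵐ[(volume : Measure (ℝ × ℝ)).restrict s] 0 :=
      (integral_eq_zero_iff_of_nonneg_ae hg0 hIg).mp hgint
    -- a.e. pointwise: fX = 1 or fY = 1
    have hae : ∀ᵐ p ∂((volume : Measure (ℝ × ℝ)).restrict s), fX p.1 = 1 ∨ fY p.2 = 1 := by
      filter_upwards [hgz, ae_restrict_mem hs] with p hp hmem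
      obtain ⟨hu, hv, hlog⟩ := hpt _ hmem
      obtain ⟨hx0, hx1⟩ := hfX p.1 hmem.1
      obtain ⟨hy0, hy1⟩ := hfY p.2 hmem.2
      have hmul : 0 < fX p.1 * fY p.2 := by positivity
      simp only [hgdef, hRdef, Pi.zero_apply] at hp
      rw [hlog] at hp
      have hkey : (-Real.log (fX p.1) + -Real.log (fY p.2)) ^ α
          = (-Real.log (fX p.1)) ^ α + (-Real.log (fY p.2)) ^ α := by
        have h2 : fX p.1 * fY p.2 *
            ((-Real.log (fX p.1)) ^ α + (-Real.log (fY p.2)) ^ α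
              - (-Real.log (fX p.1) + -Real.log (fY p.2)) ^ α) = 0 := by nlinarith [hp]
        have h3 := (mul_eq_zero.mp h2).resolve_left hmul.ne'
        linarith
      by_contra hcon
      push_neg at hcon
      obtain ⟨hcx, hcy⟩ := hcon
      have hu' : 0 < -Real.log (fX p.1) := by
        rcases hu.lt_or_eq with h | h
        · exact h
        · exfalso
          have : Real.log (fX p.1) = 0 := by linarith
          rcases Real.log_eq_zero.mp this with h' | h' | h' <;>
            first | exact absurd h' hx0.ne' | exact hcx h' | linarith
      have hv' : 0 < -Real.log (fY p.2) := by
        rcases hv.lt_or_eq with h | h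
        · exact h
        · exfalso
          have : Real.log (fY p.2) = 0 := by linarith
          rcases Real.log_eq_zero.mp this with h' | h' | h' <;>
            first | exact absurd h' hy0.ne' | exact hcy h' | linarith
      exact absurd hkey (ne_of_lt (real_rpow_add_lt hu' hv' hα0 hαlt))
    rw [hrw] at hae
    -- measurable representatives
    have hamX : AEMeasurable fX μ := hIfX.aemeasurable
    have hamY : AEMeasurable fY μ := hIfY.aemeasurable
    set F := hamX.mk fX with hFdef
    set G := hamY.mk fY with hGdef
    have hFe : fX =ᵐ[μ] F := hamX.ae_eq_mk
    have hGe : fY =ᵐ[μ] G := hamY.ae_eq_mk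
    have hlift1 : ∀ᵐ p ∂(μ.prod μ), fX p.1 = F p.1 := by
      rw [ae_iff]
      have hsub : {p : ℝ × ℝ | ¬ fX p.1 = F p.1} ⊆ {x | ¬ fX x = F x} ×ˢ (Set.univ : Set ℝ) :=
        fun p hp => ⟨hp, Set.mem_univ _⟩
      refine measure_mono_null hsub ?_
      rw [Measure.prod_prod]
      have h0 : μ {x | ¬ fX x = F x} = 0 := by rw [← ae_iff]; exact hFe
      rw [h0, zero_mul]
    have hlift2 : ∀ᵐ p ∂(μ.prod μ), fY p.2 = G p.2 := by
      rw [ae_iff]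
      have hsub : {p : ℝ × ℝ | ¬ fY p.2 = G p.2} ⊆ (Set.univ : Set ℝ) ×ˢ {y | ¬ fY y = G y} :=
        fun p hp => ⟨Set.mem_univ _, hp⟩
      refine measure_mono_null hsub ?_
      rw [Measure.prod_prod]
      have h0 : μ {y | ¬ fY y = G y} = 0 := by rw [← ae_iff]; exact hGe
      rw [h0, mul_zero]
    have hae' : ∀ᵐ p ∂(μ.prod μ), F p.1 = 1 ∨ G p.2 = 1 := by
      filter_upwards [hae, hlift1, hlift2] with p h1 h2 h3
      rw [← h2, ← h3]; exact h1
    -- deduce one marginal is a.e. 1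
    have hST : μ {x | F x ≠ 1} * μ {y | G y ≠ 1} = 0 := by
      have hnull : (μ.prod μ) {p : ℝ × ℝ | ¬ (F p.1 = 1 ∨ G p.2 = 1)} = 0 := by
        rw [← ae_iff]; exact hae'
      rw [← Measure.prod_prod]
      refine measure_mono_null (fun p hp => ?_) hnull
      push_neg
      exact ⟨hp.1, hp.2⟩
    have habs : ∀ (f : ℝ → ℝ), Integrable f μ → f =ᵐ[μ] (fun _ => (1:ℝ)) → False := by
      intro f hIf hf1
      have : Integrable (fun _ : ℝ => (1:ℝ)) μ := hIf.congr hf1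
      rw [integrable_const_iff] at this
      rcases this with h | h
      · exact one_ne_zero h
      · have h := h.measure_univ_lt_top
        rw [Measure.restrict_apply_univ, Real.volume_Ici] at h
        exact (lt_irrefl _ h)
    rcases mul_eq_zero.mp hST with h0 | h0
    · refine habs fX hIfX ?_
      have hF1 : ∀ᵐ x ∂μ, F x = 1 := by rw [ae_iff]; simpa using h0
      filter_upwards [hFe, hF1] with x h1 h2
      rw [h1, h2]
    · refine habs fY hIfY ?_
      have hG1 : ∀ᵐ y ∂μ, G y = 1 := by rw [ae_iff]; simpa using h0
      filter_upwards [hGe, hG1] with y h1 h2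
      rw [h1, h2]
  · -- α = 1 → equality
    rintro rfl
    rw [← hsplit]
    refine setIntegral_congr_fun hs ?_
    rintro ⟨x, y⟩ hp
    obtain ⟨_, _, hlog⟩ := hpt _ hp
    simp only [hRdef]
    rw [hlog, Real.rpow_one, Real.rpow_one, Real.rpow_one]
    ring
end
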